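/- For every n with 2 ≤ n ≤ N + 1, the Prüfer angle E ↦ φ_n(E) is a continuously differentiable and strictly increasing function of E on all of ℝ. -/

import Mathlib

open Real

lemma arctan_add_arctan' (u v : ℝ) :
    Real.arctan u + Real.arctan v
      = 2 * Real.arctan ((u + v) / (Real.sqrt ((1 + u ^ 2) * (1 + v ^ 2)) + (1 - u * v))) := by
  set g := Real.arctan u + Real.arctan v with hg
  set D := Real.sqrt ((1 + u ^ 2) * (1 + v ^ 2)) with hD
  have hDpos : 0 < D := Real.sqrt_pos.2 (by positivity)
  have hden : 0 < D + (1 - u * v) := by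
    rcases le_or_gt (1 - u * v) 0 with h | h
    · have huv : u + v ≠ 0 := by
        intro h0
        have : v = -u := by linarith
        nlinarith [sq_nonneg u]
      have h2 : (1 - u * v) ^ 2 < (1 + u ^ 2) * (1 + v ^ 2) := by
        nlinarith [sq_nonneg (u + v), lt_of_le_of_ne (sq_nonneg (u+v)) (Ne.symm (pow_ne_zero 2 huv))]
      have h3 : |1 - u * v| < D := by
        rw [hD, ← Real.sqrt_sq_eq_abs]
        exact Real.sqrt_lt_sqrt (sq_nonneg _) h2
      have := neg_abs_le (1 - u * v)
      linarith [abs_nonneg (1 - u * v), (abs_le.1 h3.le).1]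
    · linarith
  have hg1 : -(π / 2) < g / 2 := by
    have := Real.neg_pi_div_two_lt_arctan u
    have := Real.neg_pi_div_two_lt_arctan v
    rw [hg]; linarith
  have hg2 : g / 2 < π / 2 := by
    have := Real.arctan_lt_pi_div_two u
    have := Real.arctan_lt_pi_div_two v
    rw [hg]; linarith
  have h1 : Real.sqrt (1 + u ^ 2) ≠ 0 := by positivity
  have h2 : Real.sqrt (1 + v ^ 2) ≠ 0 := by positivity
  have hDmul : D = Real.sqrt (1 + u ^ 2) * Real.sqrt (1 + v ^ 2) := by
    rw [hD, Real.sqrt_mul (by positivity)]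
  have hsin : Real.sin g = (u + v) / D := by
    rw [hg, Real.sin_add, Real.sin_arctan, Real.cos_arctan, Real.sin_arctan, Real.cos_arctan,
      hDmul]
    field_simp
  have hcos : Real.cos g = (1 - u * v) / D := by
    rw [hg, Real.cos_add, Real.sin_arctan, Real.cos_arctan, Real.sin_arctan, Real.cos_arctan,
      hDmul]
    field_simp
  have hcoshalf : 0 < Real.cos (g / 2) := Real.cos_pos_of_mem_Ioo ⟨hg1, hg2⟩
  have hs2 : Real.sin g = 2 * Real.sin (g / 2) * Real.cos (g / 2) := by
    have := Real.sin_two_mul (g / 2)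
    rw [show 2 * (g / 2) = g by ring] at this
    exact this
  have hc2 : Real.cos g = 2 * Real.cos (g / 2) ^ 2 - 1 := by
    have := Real.cos_two_mul (g / 2)
    rw [show 2 * (g / 2) = g by ring] at this
    exact this
  have htan : Real.tan (g / 2) = (u + v) / (D + (1 - u * v)) := by
    rw [Real.tan_eq_sin_div_cos]
    have key : Real.sin (g / 2) / Real.cos (g / 2) = Real.sin g / (1 + Real.cos g) := by
      rw [hs2, hc2]
      field_simp
      ring
    rw [key, hsin, hcos]
    have hD1 : 1 + (1 - u * v) / D = (D + (1 - u * v)) / D := by field_simp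
    rw [hD1, div_div_div_cancel_right₀]
    exact hDpos.ne'
  rw [← htan, Real.arctan_tan hg1 hg2]
  ring

lemma den_pos' {a b : ℝ} (h : b = 0 → 0 < a) : 0 < Real.sqrt (a ^ 2 + b ^ 2) + a := by
  rcases eq_or_ne b 0 with hb | hb
  · have ha := h hb
    have h0 : 0 ≤ Real.sqrt (a ^ 2 + b ^ 2) := Real.sqrt_nonneg _
    linarith
  · have h2 : a ^ 2 < a ^ 2 + b ^ 2 := by
      nlinarith [lt_of_le_of_ne (sq_nonneg b) (Ne.symm (pow_ne_zero 2 hb))]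
    have h3 : |a| < Real.sqrt (a ^ 2 + b ^ 2) := by
      rw [← Real.sqrt_sq_eq_abs]; exact Real.sqrt_lt_sqrt (sq_nonneg a) h2
    linarith [neg_abs_le a]

/-- core identity on (0, π) -/
lemma pruferCore (t ψ : ℝ) (h1 : 0 < ψ) (h2 : ψ < π) :
    Real.arctan (t - Real.cos ψ / Real.sin ψ)
      = ψ - π / 2 + 2 * Real.arctan (t * Real.sin ψ ^ 2 /
        (Real.sqrt ((1 - t * Real.sin ψ * Real.cos ψ) ^ 2 + (t * Real.sin ψ ^ 2) ^ 2)
          + (1 - t * Real.sin ψ * Real.cos ψ))) := by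
  have hs : 0 < Real.sin ψ := Real.sin_pos_of_pos_of_lt_pi h1 h2
  set s := Real.sin ψ with hsdef
  set c := Real.cos ψ with hcdef
  have hsc : s ^ 2 + c ^ 2 = 1 := Real.sin_sq_add_cos_sq ψ
  have hb : Real.arctan (c / s) = π / 2 - ψ := by
    have h3 : c / s = Real.tan (π / 2 - ψ) := by
      rw [Real.tan_pi_div_two_sub, Real.tan_eq_sin_div_cos, inv_div]
    rw [h3, Real.arctan_tan (by linarith) (by linarith)]
  have key := arctan_add_arctan' (t - c / s) (c / s)
  have e1 : t - c / s + c / s = t := by ring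
  have e2 : 1 - (t - c / s) * (c / s) = (1 - t * s * c) / s ^ 2 := by
    field_simp
    linear_combination hsc
  have hX : (1 - t * s * c) ^ 2 + (t * s ^ 2) ^ 2 = s ^ 2 + (t * s - c) ^ 2 := by
    linear_combination (t ^ 2 * s ^ 2 - 1) * hsc
  have h4 : 1 + (c / s) ^ 2 = 1 / s ^ 2 := by
    field_simp
    linear_combination hsc
  have h5 : 1 + (t - c / s) ^ 2 = (s ^ 2 + (t * s - c) ^ 2) / s ^ 2 := by
    field_simp
  have e3 : (1 + (t - c / s) ^ 2) * (1 + (c / s) ^ 2)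
      = ((1 - t * s * c) ^ 2 + (t * s ^ 2) ^ 2) / (s ^ 2) ^ 2 := by
    rw [h4, h5, hX]
    ring
  rw [e1, e2, e3] at key
  rw [Real.sqrt_div (by positivity), Real.sqrt_sq (by positivity)] at key
  rw [← add_div] at key
  have hden : 0 < Real.sqrt ((1 - t * s * c) ^ 2 + (t * s ^ 2) ^ 2) + (1 - t * s * c) := by
    apply den_pos'
    intro h0
    rcases mul_eq_zero.1 h0 with h0 | h0
    · rw [h0]; norm_num
    · exact absurd h0 (by positivity)
  have e5 : t / ((Real.sqrt ((1 - t * s * c) ^ 2 + (t * s ^ 2) ^ 2) + (1 - t * s * c)) / s ^ 2)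
      = t * s ^ 2 / (Real.sqrt ((1 - t * s * c) ^ 2 + (t * s ^ 2) ^ 2) + (1 - t * s * c)) := by
    rw [div_div_eq_mul_div]
  rw [e5, hb] at key
  linarith

/-- One step of the Prüfer angle recursion: if `φ = kπ` (i.e. `sin φ = 0`) the next
angle is `(k − 1/2)π = φ − π/2`; otherwise, with `k = ⌊φ/π⌋` the unique integer with
`kπ < φ < (k+1)π`, the next angle is `arctan(E − e − cot φ) + kπ`. -/
noncomputable def pruferStep (e E φ : ℝ) : ℝ :=
  if Real.sin φ = 0 then φ - Real.pi / 2
  else Real.arctan (E - e - Real.cos φ / Real.sin φ) + Real.pi * ((⌊φ / Real.pi⌋ : ℤ) : ℝ)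

noncomputable def Fstep (t φ : ℝ) : ℝ :=
  φ - π / 2 + 2 * Real.arctan (t * Real.sin φ ^ 2 /
    (Real.sqrt ((1 - t * Real.sin φ * Real.cos φ) ^ 2 + (t * Real.sin φ ^ 2) ^ 2)
      + (1 - t * Real.sin φ * Real.cos φ)))

lemma floor_facts {φ : ℝ} (h : Real.sin φ ≠ 0) :
    (⌊φ / π⌋ : ℝ) * π < φ ∧ φ < ((⌊φ / π⌋ : ℝ) + 1) * π := by
  have hπ := Real.pi_pos
  constructor
  · rcases lt_or_eq_of_le (Int.floor_le (φ / π)) with h1 | h1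
    · calc (⌊φ / π⌋ : ℝ) * π < (φ / π) * π := by
            exact mul_lt_mul_of_pos_right h1 hπ
        _ = φ := by field_simp
    · exfalso
      apply h
      have : φ = (⌊φ / π⌋ : ℝ) * π := by
        rw [h1, div_mul_cancel₀ _ hπ.ne']
      rw [this]
      exact Real.sin_int_mul_pi _
  · have h1 := Int.lt_floor_add_one (φ / π)
    calc φ = (φ / π) * π := by field_simp
      _ < ((⌊φ / π⌋ : ℝ) + 1) * π := by
          apply mul_lt_mul_of_pos_right _ hπ
          exact_mod_cast h1

lemma pruferStep_eq_Fstep (e E φ : ℝ) : pruferStep e E φ = Fstep (E - e) φ := by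
  by_cases h : Real.sin φ = 0
  · rw [pruferStep, Fstep, if_pos h, h]
    norm_num
  · rw [pruferStep, Fstep, if_neg h]
    set k : ℤ := ⌊φ / π⌋ with hk
    obtain ⟨hk1, hk2⟩ := floor_facts h
    set ψ := φ - (k : ℝ) * π with hψ
    have h1 : 0 < ψ := by rw [hψ]; linarith
    have h2 : ψ < π := by rw [hψ]; nlinarith [Real.pi_pos]
    have hφψ : φ = ψ + (k : ℝ) * π := by rw [hψ]; ring
    have hsin : Real.sin φ = (-1 : ℝ) ^ k * Real.sin ψ := by
      rw [hφψ]; exact Real.sin_add_int_mul_pi ψ k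
    have hcos : Real.cos φ = (-1 : ℝ) ^ k * Real.cos ψ := by
      rw [hφψ]; exact Real.cos_add_int_mul_pi ψ k
    have hpm : (-1 : ℝ) ^ k * (-1 : ℝ) ^ k = 1 := by
      rw [← zpow_add₀ (by norm_num : (-1 : ℝ) ≠ 0)]
      exact Even.neg_one_zpow ⟨k, rfl⟩
    have hpm0 : ((-1 : ℝ) ^ k) ≠ 0 := by
      intro h0
      rw [h0, mul_zero] at hpm
      norm_num at hpm
    have hs2 : Real.sin φ ^ 2 = Real.sin ψ ^ 2 := by
      rw [hsin, mul_pow, sq ((-1 : ℝ) ^ k), hpm, one_mul]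
    have hscc : Real.sin φ * Real.cos φ = Real.sin ψ * Real.cos ψ := by
      rw [hsin, hcos, mul_mul_mul_comm, hpm, one_mul]
    have hscc' : ∀ t : ℝ, t * Real.sin φ * Real.cos φ = t * Real.sin ψ * Real.cos ψ := by
      intro t; rw [mul_assoc, mul_assoc, hscc]
    have hquot : Real.cos φ / Real.sin φ = Real.cos ψ / Real.sin ψ := by
      rw [hsin, hcos, mul_div_mul_left _ _ hpm0]
    rw [hs2, hscc' (E - e), hquot]
    have core := pruferCore (E - e) ψ h1 h2
    rw [core]
    rw [hφψ]
    ring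

lemma G_pos (t φ : ℝ) : 0 < Real.sin φ ^ 2 + (t * Real.sin φ - Real.cos φ) ^ 2 := by
  have hsc := Real.sin_sq_add_cos_sq φ
  rcases eq_or_ne (Real.sin φ) 0 with h | h
  · rw [h] at hsc ⊢
    nlinarith
  · nlinarith [lt_of_le_of_ne (sq_nonneg (Real.sin φ)) (Ne.symm (pow_ne_zero 2 h)),
      sq_nonneg (t * Real.sin φ - Real.cos φ)]

lemma AB_pos (t φ : ℝ) :
    0 < (1 - t * Real.sin φ * Real.cos φ) ^ 2 + (t * Real.sin φ ^ 2) ^ 2 := by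
  have hsc := Real.sin_sq_add_cos_sq φ
  have hX : (1 - t * Real.sin φ * Real.cos φ) ^ 2 + (t * Real.sin φ ^ 2) ^ 2
      = Real.sin φ ^ 2 + (t * Real.sin φ - Real.cos φ) ^ 2 := by
    linear_combination (t ^ 2 * Real.sin φ ^ 2 - 1) * hsc
  rw [hX]
  exact G_pos t φ

lemma den_pos (t φ : ℝ) :
    0 < Real.sqrt ((1 - t * Real.sin φ * Real.cos φ) ^ 2 + (t * Real.sin φ ^ 2) ^ 2)
      + (1 - t * Real.sin φ * Real.cos φ) := by
  apply den_pos'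
  intro h0
  rcases mul_eq_zero.1 h0 with h0 | h0
  · rw [h0]; norm_num
  · have h1 : Real.sin φ = 0 := by
      exact pow_eq_zero_iff (two_ne_zero) |>.1 h0
    rw [h1]; norm_num

lemma contDiff_Fstep : ContDiff ℝ 1 (fun p : ℝ × ℝ => Fstep p.1 p.2) := by
  have hA : ContDiff ℝ 1 (fun p : ℝ × ℝ => 1 - p.1 * Real.sin p.2 * Real.cos p.2) :=
    contDiff_const.sub ((contDiff_fst.mul (Real.contDiff_sin.comp contDiff_snd)).mul
      (Real.contDiff_cos.comp contDiff_snd))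
  have hB : ContDiff ℝ 1 (fun p : ℝ × ℝ => p.1 * Real.sin p.2 ^ 2) :=
    contDiff_fst.mul ((Real.contDiff_sin.comp contDiff_snd).pow 2)
  rw [contDiff_iff_contDiffAt]
  intro p
  unfold Fstep
  apply ContDiffAt.add
  · exact (contDiff_snd.sub contDiff_const).contDiffAt
  · apply ContDiffAt.mul contDiffAt_const
    apply ContDiffAt.comp p Real.contDiff_arctan.contDiffAt
    apply ContDiffAt.div hB.contDiffAt
    · exact ((Real.contDiffAt_sqrt (AB_pos p.1 p.2).ne').comp p
        (((hA.pow 2).add (hB.pow 2)).contDiffAt)).add hA.contDiffAt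
    · exact (den_pos p.1 p.2).ne'

lemma hasDerivAt_Fstep (t : ℝ) {φ : ℝ} (h : Real.sin φ ≠ 0) :
    HasDerivAt (fun x => Fstep t x)
      (1 / (Real.sin φ ^ 2 + (t * Real.sin φ - Real.cos φ) ^ 2)) φ := by
  have hπ := Real.pi_pos
  obtain ⟨hk1, hk2⟩ := floor_facts h
  set k : ℤ := ⌊φ / π⌋ with hk
  have hmem : φ ∈ Set.Ioo ((k : ℝ) * π) (((k : ℝ) + 1) * π) := ⟨hk1, hk2⟩
  have hloc : (fun x => Fstep t x) =ᶠ[nhds φ]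
      fun x => Real.arctan (t - 0 - Real.cos x / Real.sin x) + π * (k : ℝ) := by
    filter_upwards [isOpen_Ioo.mem_nhds hmem] with x hx
    obtain ⟨hx1, hx2⟩ := hx
    have hsx : Real.sin x ≠ 0 := by
      intro h0
      obtain ⟨n, hn⟩ := Real.sin_eq_zero_iff.1 h0
      rw [← hn] at hx1 hx2
      have l1 : (k : ℝ) < (n : ℝ) := lt_of_mul_lt_mul_right hx1 hπ.le
      have l2 : (n : ℝ) < (k : ℝ) + 1 := by
        have := lt_of_mul_lt_mul_right hx2 hπ.le
        exact this
      have l3 : (k : ℤ) < n := by exact_mod_cast l1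
      have l4 : (n : ℤ) < k + 1 := by exact_mod_cast l2
      omega
    have hfx : ⌊x / π⌋ = k := by
      rw [Int.floor_eq_iff]
      constructor
      · rw [le_div_iff₀ hπ]
        exact hx1.le
      · rw [div_lt_iff₀ hπ]
        push_cast
        linarith
    have hid := pruferStep_eq_Fstep 0 t x
    rw [sub_zero] at hid
    rw [← hid, pruferStep, if_neg hsx, hfx]
  have hu : HasDerivAt (fun x => t - 0 - Real.cos x / Real.sin x)
      (0 - ((-Real.sin φ * Real.sin φ - Real.cos φ * Real.cos φ) / Real.sin φ ^ 2)) φ := by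
    exact (hasDerivAt_const φ (t - 0)).sub ((Real.hasDerivAt_cos φ).div (Real.hasDerivAt_sin φ) h)
  have harc := ((Real.hasDerivAt_arctan (t - 0 - Real.cos φ / Real.sin φ)).comp φ hu).add_const
      (π * (k : ℝ))
  have heq : HasDerivAt (fun x => Real.arctan (t - 0 - Real.cos x / Real.sin x) + π * (k : ℝ))
      (1 / (1 + (t - 0 - Real.cos φ / Real.sin φ) ^ 2) *
        (0 - ((-Real.sin φ * Real.sin φ - Real.cos φ * Real.cos φ) / Real.sin φ ^ 2))) φ := harc
  have hval : 1 / (1 + (t - 0 - Real.cos φ / Real.sin φ) ^ 2) *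
        (0 - ((-Real.sin φ * Real.sin φ - Real.cos φ * Real.cos φ) / Real.sin φ ^ 2))
      = 1 / (Real.sin φ ^ 2 + (t * Real.sin φ - Real.cos φ) ^ 2) := by
    have hsc := Real.sin_sq_add_cos_sq φ
    have hG := G_pos t φ
    have hden2 : (1 + (t - 0 - Real.cos φ / Real.sin φ) ^ 2)
        = (Real.sin φ ^ 2 + (t * Real.sin φ - Real.cos φ) ^ 2) / Real.sin φ ^ 2 := by
      field_simp
      ring
    have hnum2 : (0 - ((-Real.sin φ * Real.sin φ - Real.cos φ * Real.cos φ) / Real.sin φ ^ 2))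
        = 1 / Real.sin φ ^ 2 := by
      field_simp
      linear_combination hsc
    rw [hden2, hnum2, one_div_div]
    rw [div_mul_div_comm, mul_one, mul_comm]
    rw [← div_div, div_self (by positivity : (Real.sin φ ^ 2 : ℝ) ≠ 0)]
  rw [hval] at heq
  exact heq.congr_of_eventuallyEq hloc

lemma dense_sin_ne : Dense {x : ℝ | Real.sin x ≠ 0} := by
  have hcount : Set.Countable {x : ℝ | Real.sin x = 0} := by
    apply Set.Countable.mono _ (Set.countable_range fun n : ℤ => (n : ℝ) * π)
    intro x hx
    obtain ⟨n, hn⟩ := Real.sin_eq_zero_iff.1 hx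
    exact ⟨n, hn⟩
  have hd := hcount.dense_compl ℝ
  exact hd

lemma contDiff_Fstep_phi (t : ℝ) : ContDiff ℝ 1 (fun φ => Fstep t φ) :=
  contDiff_Fstep.comp (contDiff_const.prodMk contDiff_id)

lemma deriv_Fstep (t : ℝ) :
    deriv (fun φ => Fstep t φ)
      = fun φ => 1 / (Real.sin φ ^ 2 + (t * Real.sin φ - Real.cos φ) ^ 2) := by
  apply Continuous.ext_on dense_sin_ne ((contDiff_Fstep_phi t).continuous_deriv le_rfl)
  · apply Continuous.div continuous_const
    · fun_prop
    · exact fun x => (G_pos t x).ne'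
  · intro x hx
    exact (hasDerivAt_Fstep t hx).deriv

lemma strictMono_Fstep (t : ℝ) : StrictMono (fun φ => Fstep t φ) := by
  apply strictMono_of_deriv_pos
  intro x
  rw [deriv_Fstep t]
  exact one_div_pos.2 (G_pos t x)

lemma monotone_Fstep_t (φ : ℝ) : Monotone fun t => Fstep t φ := by
  by_cases h : Real.sin φ = 0
  · have hc : ∀ t, Fstep t φ = φ - π / 2 := by
      intro t
      rw [Fstep, h]
      norm_num
  
    intro a b _
    simp only [hc a, hc b, le_refl]
  · intro a b hab
    have ha := pruferStep_eq_Fstep 0 a φ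
    have hb := pruferStep_eq_Fstep 0 b φ
    rw [sub_zero] at ha hb
    simp only at *
    rw [← ha, ← hb]
    simp only [pruferStep, if_neg h]
    apply add_le_add_left
    exact Real.arctan_strictMono.monotone (by linarith)

lemma strictMono_Fstep_t {φ : ℝ} (h : Real.sin φ ≠ 0) : StrictMono fun t => Fstep t φ := by
  intro a b hab
  have ha := pruferStep_eq_Fstep 0 a φ
  have hb := pruferStep_eq_Fstep 0 b φ
  rw [sub_zero] at ha hb
  simp only at *
  rw [← ha, ← hb]
  simp only [pruferStep, if_neg h]
  apply add_lt_add_left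
  exact Real.arctan_strictMono (by linarith)

/-- The Prüfer angles: `φ_1(E) = π/2` and `φ_{n+1}(E) = pruferStep (ε n) E (φ_n(E))`
for `n ≥ 1`.  (The value at index `0` is junk, set to `π/2`.) -/
noncomputable def prufer (ε : ℕ → ℝ) (E : ℝ) : ℕ → ℝ
  | 0 => Real.pi / 2
  | 1 => Real.pi / 2
  | n + 2 => pruferStep (ε (n + 1)) E (prufer ε E (n + 1))

/-- For every `2 ≤ n ≤ N + 1`, the Prüfer angle `E ↦ φ_n(E)` is a continuously
differentiable and strictly increasing function of `E` on all of `ℝ`. -/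
theorem prufer_contDiff_strictMono
    (N : ℕ) (hN : 1 ≤ N) (W : ℝ) (hW : 0 ≤ W)
    (ε : ℕ → ℝ) (hε : ∀ n, 1 ≤ n → n ≤ N → ε n ∈ Set.Icc 0 W) :
    ∀ n : ℕ, 2 ≤ n → n ≤ N + 1 →
      ContDiff ℝ 1 (fun E : ℝ => prufer ε E n) ∧
      StrictMono (fun E : ℝ => prufer ε E n) := by
  have key : ∀ m : ℕ, ContDiff ℝ 1 (fun E : ℝ => prufer ε E (m + 2)) ∧
      StrictMono (fun E : ℝ => prufer ε E (m + 2)) := by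
    intro m
    induction m with
    | zero =>
      have hrw : (fun E : ℝ => prufer ε E (0 + 2)) = fun E : ℝ => Fstep (E - ε 1) (π / 2) := by
        funext E
        have h1 : prufer ε E (0 + 2) = pruferStep (ε 1) E (prufer ε E 1) := rfl
        have h2 : prufer ε E 1 = π / 2 := rfl
        rw [h1, h2, pruferStep_eq_Fstep]
      rw [hrw]
      constructor
      · exact contDiff_Fstep.comp ((contDiff_id.sub contDiff_const).prodMk contDiff_const)
      · intro E1 E2 hE
        have hs : Real.sin (π / 2) ≠ 0 := by
          rw [Real.sin_pi_div_two]; norm_num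
        exact strictMono_Fstep_t hs (by linarith : E1 - ε 1 < E2 - ε 1)
    | succ k ih =>
      have hrw : (fun E : ℝ => prufer ε E (k + 1 + 2))
          = fun E : ℝ => Fstep (E - ε (k + 2)) (prufer ε E (k + 2)) := by
        funext E
        have h1 : prufer ε E (k + 1 + 2) = pruferStep (ε (k + 2)) E (prufer ε E (k + 2)) := rfl
        rw [h1, pruferStep_eq_Fstep]
      rw [hrw]
      constructor
      · exact contDiff_Fstep.comp ((contDiff_id.sub contDiff_const).prodMk ih.1)
      · intro E1 E2 hE
        calc Fstep (E1 - ε (k + 2)) (prufer ε E1 (k + 2))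
            ≤ Fstep (E2 - ε (k + 2)) (prufer ε E1 (k + 2)) :=
              monotone_Fstep_t _ (by linarith)
          _ < Fstep (E2 - ε (k + 2)) (prufer ε E2 (k + 2)) :=
              strictMono_Fstep _ (ih.2 hE)
  intro n hn _
  obtain ⟨m, rfl⟩ : ∃ m, n = m + 2 := ⟨n - 2, by omega⟩
  exact key m
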